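/- arXiv:1710.10293 — 3 statements merged into one kernel-verified Lean document; each statement's English description precedes it below -/
import Mathlib

section
/- Let q_{α,β}(x) = αx² + 2βx + 1 − (2/3)α for real parameters α, β. Then q_{α,β}(x) ≥ 0 for all x ∈ [−1,1] if and only if both 2|β| ≤ 1 + α/3 and (α ≤ |β| or β² ≤ α − (2/3)α²). -/
/-- The quadratic `q_{α,β}(x) = αx² + 2βx + 1 − (2/3)α` is nonnegative on `[−1,1]`
iff both `2|β| ≤ 1 + α/3` and (`α ≤ |β|` or `β² ≤ α − (2/3)α²`). -/
theorem stmt_4 (α β : ℝ) :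
    (∀ x ∈ Set.Icc (-1 : ℝ) 1, 0 ≤ α * x ^ 2 + 2 * β * x + 1 - 2 / 3 * α) ↔
    (2 * |β| ≤ 1 + α / 3 ∧ (α ≤ |β| ∨ β ^ 2 ≤ α - 2 / 3 * α ^ 2)) := by
  constructor
  · intro h
    have h1 := h 1 ⟨by norm_num, le_refl 1⟩
    have h2 := h (-1) ⟨le_refl _, by norm_num⟩
    constructor
    · rcases abs_cases β with ⟨hb, _⟩ | ⟨hb, _⟩ <;> rw [hb] <;> nlinarith
    · by_cases hab : α ≤ |β|
      · exact Or.inl hab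
      · right
        push_neg at hab
        have hα : 0 < α := lt_of_le_of_lt (abs_nonneg β) hab
        have hβ : |β| / α < 1 := (div_lt_one hα).mpr hab
        have hmem : -β / α ∈ Set.Icc (-1 : ℝ) 1 := by
          constructor
          · have : -(|β| / α) ≤ -β / α := by
              rw [neg_div]
              apply neg_le_neg
              apply div_le_div_of_nonneg_right _ hα.le
              exact le_abs_self β
            linarith
          · have : -β / α ≤ |β| / α := by
              apply div_le_div_of_nonneg_right _ hα.le
              exact neg_le_abs β
            linarith
        have h3 := h (-β / α) hmem
        have hne : α ≠ 0 := ne_of_gt hα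
        rw [div_pow, neg_pow] at h3
        have h4 : 0 ≤ α * (β ^ 2 / α ^ 2) + 2 * β * (-β / α) + 1 - 2 / 3 * α := by
          convert h3 using 3
          ring
        have h5 : α * (β ^ 2 / α ^ 2) = β ^ 2 / α := by
          field_simp
        have h6 : 2 * β * (-β / α) = -(2 * β ^ 2) / α := by ring
        rw [h5, h6] at h4
        have h7 : 0 ≤ (α * (1 - 2 / 3 * α) - β ^ 2) / α := by
          have : (α * (1 - 2 / 3 * α) - β ^ 2) / α
              = β ^ 2 / α + -(2 * β ^ 2) / α + 1 - 2 / 3 * α := by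
            field_simp
            ring
          linarith [this ▸ h4]
        have h8 : 0 ≤ α * (1 - 2 / 3 * α) - β ^ 2 := by
          by_contra hc
          push_neg at hc
          have := div_neg_of_neg_of_pos hc hα
          linarith
        nlinarith
  · rintro ⟨h1, h2⟩ x ⟨hx1, hx2⟩
    have hq1 : 0 ≤ α / 3 + 2 * β + 1 := by
      rcases abs_cases β with ⟨hb, _⟩ | ⟨hb, _⟩ <;> rw [hb] at h1 <;> linarith
    have hq2 : 0 ≤ α / 3 - 2 * β + 1 := by
      rcases abs_cases β with ⟨hb, _⟩ | ⟨hb, _⟩ <;> rw [hb] at h1 <;> linarith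
    rcases h2 with hab | hd
    · rcases le_or_gt α 0 with hα | hα
      · nlinarith [mul_nonneg (sub_nonneg.mpr hx2) (sub_nonneg.mpr (neg_le_iff_add_nonneg.mp hx1))]
      · rcases abs_cases β with ⟨hb, hb'⟩ | ⟨hb, hb'⟩
        · -- β ≥ 0, β ≥ α : min at x = -1
          rw [hb] at hab
          nlinarith [sq_nonneg (x + 1), mul_nonneg (sub_nonneg.mpr hab) (sub_nonneg.mpr (neg_le_iff_add_nonneg.mp hx1))]
        · rw [hb] at hab
          nlinarith [sq_nonneg (x - 1), mul_nonneg (sub_nonneg.mpr hab) (sub_nonneg.mpr hx2)]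
    · have hα0 : 0 ≤ α := by nlinarith [sq_nonneg β, sq_nonneg α]
      rcases eq_or_lt_of_le hα0 with heq | hα
      · have hβ0 : β = 0 := by nlinarith [sq_nonneg β]
        rw [← heq, hβ0]; norm_num
      · have key : 0 ≤ α * (α * x ^ 2 + 2 * β * x + 1 - 2 / 3 * α) := by
          nlinarith [sq_nonneg (α * x + β)]
        by_contra hc
        push_neg at hc
        nlinarith
end

section
/- Let n be a finite nonempty index type, G an n × n matrix over ℝ, and c, t, T, T' real numbers. Let A = G_ℂ + (ic)·I, where G_ℂ is the entrywise complexification of G and I is the identity matrix, and assume A is invertible. Then ∫_T^{T'} cos(cu) · exp((u − t)·G) du equals the entrywise real part of e^{ict} · A⁻¹ · (exp((T' − t)·A) − exp((T − t)·A)), where exp denotes the matrix exponential (over ℝ on the left side, over ℂ on the right side) and the integral is taken entrywise. -/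
open NormedSpace  -- for the exponential `exp`

/-- With `A = G_ℂ + (ic)·I` invertible, the entrywise integral
`∫_T^{T'} cos(cu) exp((u − t)G) du` equals the entrywise real part of
`e^{ict} A⁻¹ (exp((T' − t)A) − exp((T − t)A))`. -/
theorem stmt_11 {n : Type*} [Fintype n] [DecidableEq n] [Nonempty n]
    (G : Matrix n n ℝ) (c t T T' : ℝ)
    (A : Matrix n n ℂ)
    (hAdef : A = G.map (Complex.ofReal) + (Complex.I * c) • (1 : Matrix n n ℂ))
    (hA : IsUnit A) (i j : n) :
    ∫ u in T..T', Real.cos (c * u) * (exp ((u - t) • G)) i j =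
      ((Complex.exp (Complex.I * c * t) •
        (A⁻¹ * (exp ((T' - t) • A) - exp ((T - t) • A)))) i j).re := by
  letI : SeminormedRing (Matrix n n ℂ) := Matrix.linftyOpSemiNormedRing
  letI : NormedRing (Matrix n n ℂ) := Matrix.linftyOpNormedRing
  letI : NormedAlgebra ℝ (Matrix n n ℂ) := Matrix.linftyOpNormedAlgebra
  letI : NormedAlgebra ℂ (Matrix n n ℂ) := Matrix.linftyOpNormedAlgebra
  letI : SeminormedRing (Matrix n n ℝ) := Matrix.linftyOpSemiNormedRing
  letI : NormedRing (Matrix n n ℝ) := Matrix.linftyOpNormedRing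
  letI : NormedAlgebra ℝ (Matrix n n ℝ) := Matrix.linftyOpNormedAlgebra
  letI : NormedAlgebra ℚ (Matrix n n ℂ) := Matrix.linftyOpNormedAlgebra
  letI : NormedAlgebra ℚ (Matrix n n ℝ) := Matrix.linftyOpNormedAlgebra
  -- key pointwise identity
  have key : ∀ u : ℝ, Complex.exp (Complex.I * c * t) • exp ((u - t) • A) =
      Complex.exp (Complex.I * c * u) • (exp ((u - t) • G)).map Complex.ofReal := by
    intro u
    have hsplit : (u - t) • A =
        ((u - t) • G).map Complex.ofReal + (((u - t) : ℂ) * (Complex.I * c)) • (1 : Matrix n n ℂ) := by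
      rw [hAdef, smul_add]
      congr 1
      · ext a b; simp [Matrix.map_apply]
      · ext a b
        simp [Matrix.smul_apply, Complex.real_smul]
        ring
    have hcomm : Commute (((u - t) • G).map Complex.ofReal)
        ((((u - t) : ℂ) * (Complex.I * c)) • (1 : Matrix n n ℂ)) :=
      (Commute.one_right _).smul_right _
    have hmap : (((u - t) • G).map Complex.ofReal : Matrix n n ℂ) =
        (Complex.ofRealHom.mapMatrix : Matrix n n ℝ →+* Matrix n n ℂ) ((u - t) • G) := rfl
    have hcont : Continuous (Complex.ofRealHom.mapMatrix : Matrix n n ℝ →+* Matrix n n ℂ) := by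
      apply continuous_matrix
      intro a b
      exact Complex.continuous_ofReal.comp ((continuous_apply b).comp (continuous_apply a))
    have hexp_map : exp (((u - t) • G).map Complex.ofReal) =
        (exp ((u - t) • G)).map Complex.ofReal := by
      rw [hmap]; erw [← map_exp _ hcont]
      rfl
    have hscalar : exp ((((u - t) : ℂ) * (Complex.I * c)) • (1 : Matrix n n ℂ)) =
        Complex.exp (((u - t) : ℂ) * (Complex.I * c)) • (1 : Matrix n n ℂ) := by
      have h1 : ((((u - t) : ℂ) * (Complex.I * c)) • (1 : Matrix n n ℂ)) =
          algebraMap ℂ (Matrix n n ℂ) (((u - t) : ℂ) * (Complex.I * c)) := by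
        simp [Algebra.algebraMap_eq_smul_one]
      erw [h1, ← algebraMap_exp_comm, ← Complex.exp_eq_exp_ℂ,
        Algebra.algebraMap_eq_smul_one]
    erw [hsplit, exp_add_of_commute hcomm, hexp_map, hscalar]
    rw [mul_smul_comm, smul_smul, mul_one, ← Complex.exp_add]
    congr 2
    push_cast
    ring
  -- the antiderivative, entrywise
  set B : Matrix n n ℂ := Complex.exp (Complex.I * c * t) • A⁻¹ with hB
  set F : ℝ → ℝ := fun u => ((B * exp ((u - t) • A)) i j).re with hF
  have hAinv : A⁻¹ * A = 1 := Matrix.nonsing_inv_mul A ((Matrix.isUnit_iff_isUnit_det A).mp hA)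
  have hsm : ∀ (r : ℝ) (M : Matrix n n ℂ), r • M = (r : ℂ) • M := by
    intro r M
    ext a b
    simp [Matrix.smul_apply, Complex.real_smul]
  have hcommA : ∀ u : ℝ, Commute (exp ((u - t) • A)) A := by
    intro u
    rw [hsm (u - t) A]
    exact ((Commute.refl A).smul_left _).exp_left
  have hBmul : ∀ u : ℝ, B * (exp ((u - t) • A) * A) =
      Complex.exp (Complex.I * c * t) • exp ((u - t) • A) := by
    intro u
    rw [hB, Matrix.smul_mul, (hcommA u).eq, ← mul_assoc, hAinv, one_mul]
  -- the entry-plus-re continuous linear map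
  let L : Matrix n n ℂ →L[ℝ] ℝ :=
    Complex.reCLM.comp ((ContinuousLinearMap.proj (R := ℝ) (φ := fun _ : n => ℂ) j).comp
      (ContinuousLinearMap.proj (R := ℝ) (φ := fun _ : n => n → ℂ) i))
  have hL : ∀ M : Matrix n n ℂ, L M = (M i j).re := fun _ => rfl
  have hderiv : ∀ u : ℝ, HasDerivAt F (Real.cos (c * u) * (exp ((u - t) • G)) i j) u := by
    intro u
    have h1 : HasDerivAt (fun v : ℝ => exp ((v - t) • A))
        (exp ((u - t) • A) * A) u := by
      have h0 : HasDerivAt (fun v : ℝ => exp (v • A)) (exp ((u - t) • A) * A) (u - t) :=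
        hasDerivAt_exp_smul_const (𝕂 := ℝ) A (u - t)
      have hg : HasDerivAt (fun v : ℝ => v - t) 1 u := by
        simpa using (hasDerivAt_id u).sub_const t
      have h0' := HasDerivAt.scomp (𝕜 := ℝ) (𝕜' := ℝ) u h0 hg
      simp only [one_smul] at h0'
      exact h0'
    have h2 : HasDerivAt (fun v : ℝ => B * exp ((v - t) • A))
        (Complex.exp (Complex.I * c * t) • exp ((u - t) • A)) u := by
      have := h1.const_mul B
      rwa [hBmul u] at this
    have h3 := L.hasFDerivAt.comp_hasDerivAt u h2
    have h4 : L (Complex.exp (Complex.I * c * t) • exp ((u - t) • A)) =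
        Real.cos (c * u) * (exp ((u - t) • G)) i j := by
      rw [hL, key u]
      have h5 : (Complex.exp (Complex.I * c * u)).re = Real.cos (c * u) := by
        rw [show Complex.I * (c : ℂ) * u = ((c * u : ℝ) : ℂ) * Complex.I by push_cast; ring,
          Complex.exp_ofReal_mul_I_re]
      rw [Matrix.smul_apply, Matrix.map_apply, smul_eq_mul, Complex.mul_re]
      simp [h5]
    rw [← h4]
    exact h3
  have hcontf : Continuous fun u : ℝ => Real.cos (c * u) * (exp ((u - t) • G)) i j := by
    have hc1 : Continuous fun u : ℝ => exp ((u - t) • G) :=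
      exp_continuous.comp (((continuous_id.sub continuous_const)).smul continuous_const)
    exact (Real.continuous_cos.comp (continuous_const.mul continuous_id)).mul
      (((continuous_apply j).comp ((continuous_apply i).comp hc1)))
  have hFTC := intervalIntegral.integral_eq_sub_of_hasDerivAt
    (f := F) (f' := fun u => Real.cos (c * u) * (exp ((u - t) • G)) i j)
    (fun u _ => hderiv u) (hcontf.intervalIntegrable T T')
  rw [hFTC, hF]
  simp only [hB, Matrix.smul_mul, mul_sub, smul_sub, Matrix.sub_apply, Complex.sub_re]
end

section
/- Let (Ω, F, P) be a probability space and X: Ω → ℝ a random variable with X ≥ 0 almost surely and such that X^j is integrable for every 1 ≤ j ≤ n. Let Φ(x) = Σ_{j=0}^n a_j x^j be a real polynomial that is monotone nondecreasing on [0, ∞), and let k ≥ 0. Then E[max(Φ(X) − Φ(k), 0)] = Σ_{j=1}^n a_j · E[max(X^j − k^j, 0)]. -/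
open MeasureTheory

/-- If `X ≥ 0` a.s. with integrable powers up to degree `n`, and
`Φ(x) = Σ_{j=0}^n a_j x^j` is monotone nondecreasing on `[0,∞)`, then for `k ≥ 0`,
`E[(Φ(X) − Φ(k))₊] = Σ_{j=1}^n a_j E[(X^j − k^j)₊]`. -/
theorem stmt_16 {Ω : Type*} [MeasureSpace Ω] [IsProbabilityMeasure (volume : Measure Ω)]
    (X : Ω → ℝ) (hX : ∀ᵐ ω ∂(volume : Measure Ω), 0 ≤ X ω)
    (n : ℕ) (hint : ∀ j, 1 ≤ j → j ≤ n → Integrable (fun ω => X ω ^ j) (volume : Measure Ω))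
    (a : ℕ → ℝ) (Φ : ℝ → ℝ)
    (hΦdef : ∀ x, Φ x = ∑ j ∈ Finset.range (n + 1), a j * x ^ j)
    (hmono : MonotoneOn Φ (Set.Ici 0))
    (k : ℝ) (hk : 0 ≤ k) :
    (∫ ω, max (Φ (X ω) - Φ k) 0) =
      ∑ j ∈ Finset.Icc 1 n, a j * ∫ ω, max (X ω ^ j - k ^ j) 0 := by
  have key : ∀ᵐ ω ∂(volume : Measure Ω),
      max (Φ (X ω) - Φ k) 0 =
        ∑ j ∈ Finset.Icc 1 n, a j * max (X ω ^ j - k ^ j) 0 := by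
    filter_upwards [hX] with ω hx
    rcases le_total (X ω) k with h | h
    · rw [max_eq_right (sub_nonpos.2 (hmono (Set.mem_Ici.2 hx) (Set.mem_Ici.2 hk) h))]
      refine (Finset.sum_eq_zero fun j hj => ?_).symm
      rw [max_eq_right (sub_nonpos.2 (pow_le_pow_left₀ hx h j)), mul_zero]
    · rw [max_eq_left (sub_nonneg.2 (hmono (Set.mem_Ici.2 hk) (Set.mem_Ici.2 hx) h)),
        hΦdef, hΦdef, ← Finset.sum_sub_distrib]
      have h1 : ∀ j ∈ Finset.Icc 1 n,
          a j * max (X ω ^ j - k ^ j) 0 = a j * X ω ^ j - a j * k ^ j := by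
        intro j hj
        rw [max_eq_left (sub_nonneg.2 (pow_le_pow_left₀ hk h j))]
        ring
      rw [Finset.sum_congr rfl h1]
      refine (Finset.sum_subset ?_ ?_).symm
      · intro j hj
        simp only [Finset.mem_Icc, Finset.mem_range] at *
        omega
      · intro j hj hj'
        simp only [Finset.mem_Icc, Finset.mem_range] at hj hj'
        have : j = 0 := by omega
        subst this; simp
  have hintk : ∀ j ∈ Finset.Icc 1 n,
      Integrable (fun ω => a j * max (X ω ^ j - k ^ j) 0) (volume : Measure Ω) := by
    intro j hj
    obtain ⟨h1, h2⟩ := Finset.mem_Icc.1 hj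
    exact (((hint j h1 h2).sub (integrable_const _)).pos_part).const_mul _
  rw [integral_congr_ae key, integral_finset_sum _ hintk]
  exact Finset.sum_congr rfl fun j _ => MeasureTheory.integral_const_mul _ _
end
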